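/- Let Φ be a nondegenerate homogeneous cubic (matrix [[3a,2b,c],[b,2c,3d]] of rank 2), and let n₁(ξ), n₂(ξ) ∈ ℝ⁵ be as in the paper (the tangent vectors of the surface (t,s,Φ_t,Φ_s,Φ)). Let u, v, w ∈ ℝ⁵ be linearly independent. Then there exists ξ ∈ ℝ² such that the 2×3 matrix whose columns are (u·n₁(ξ), u·n₂(ξ)), (v·n₁(ξ), v·n₂(ξ)), (w·n₁(ξ), w·n₂(ξ)) has rank 2. -/

import Mathlib

open Matrix Module Submodule
private lemma det2_aux {A1 B1 A2 B2 s1 s2 : ℝ} (h1 : A1 * s1 + B1 * s2 = 0)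
    (h2 : A2 * s1 + B2 * s2 = 0) (hs : s1 ≠ 0 ∨ s2 ≠ 0) :
    A1 * B2 - B1 * A2 = 0 := by
  rcases hs with h | h
  · have hz : (A1 * B2 - B1 * A2) * s1 = 0 := by linear_combination B2 * h1 - B1 * h2
    exact (mul_eq_zero.mp hz).resolve_right h
  · have hz : (A1 * B2 - B1 * A2) * s2 = 0 := by linear_combination A1 * h2 - A2 * h1
    exact (mul_eq_zero.mp hz).resolve_right h

private lemma pair_dep_of_minors (x1 x2 x3 y1 y2 y3 : ℝ)
    (h12 : x1 * y2 - x2 * y1 = 0) (h13 : x1 * y3 - x3 * y1 = 0)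
    (h23 : x2 * y3 - x3 * y2 = 0) :
    ∃ l m : ℝ, (l ≠ 0 ∨ m ≠ 0) ∧ l * x1 + m * y1 = 0 ∧ l * x2 + m * y2 = 0 ∧
      l * x3 + m * y3 = 0 := by
  by_cases h1 : x1 ≠ 0
  · refine ⟨y1, -x1, Or.inr (neg_ne_zero.mpr h1), by ring, ?_, ?_⟩
    · linear_combination -h12
    · linear_combination -h13
  push_neg at h1
  by_cases h2 : x2 ≠ 0
  · refine ⟨y2, -x2, Or.inr (neg_ne_zero.mpr h2), ?_, by ring, ?_⟩
    · linear_combination h12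
    · linear_combination -h23
  push_neg at h2
  by_cases h3 : x3 ≠ 0
  · refine ⟨y3, -x3, Or.inr (neg_ne_zero.mpr h3), ?_, ?_, by ring⟩
    · linear_combination h13
    · linear_combination h23
  push_neg at h3
  exact ⟨1, 0, Or.inl one_ne_zero, by simp [h1], by simp [h2], by simp [h3]⟩

private lemma finrank_span_single_le {n : ℕ} (y : Fin n → ℝ) :
    finrank ℝ (span ℝ ({y} : Set (Fin n → ℝ))) ≤ 1 := by
  by_cases hy : y = 0
  · subst hy
    rw [Submodule.span_zero_singleton]
    simp
  · rw [finrank_span_singleton hy]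

private lemma rows_dep_of_rank_ne_two {n : ℕ} (M : Matrix (Fin 2) (Fin n) ℝ)
    (h : M.rank ≠ 2) :
    ∃ l m : ℝ, (l ≠ 0 ∨ m ≠ 0) ∧ ∀ j, l * M 0 j + m * M 1 j = 0 := by
  by_contra hno
  push_neg at hno
  have hind : LinearIndependent ℝ M := by
    by_contra hni
    obtain ⟨g, hsum, i, hgi⟩ := Fintype.not_linearIndependent_iff.mp hni
    have hg01 : g 0 ≠ 0 ∨ g 1 ≠ 0 := by
      fin_cases i
      · exact Or.inl hgi
      · exact Or.inr hgi
    obtain ⟨j, hj⟩ := hno (g 0) (g 1) hg01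
    rw [Fin.sum_univ_two] at hsum
    have := congrFun hsum j
    simp only [Pi.add_apply, Pi.smul_apply, smul_eq_mul, Pi.zero_apply] at this
    exact hj this
  have := hind.rank_matrix
  simp at this
  exact h this

private lemma rank_ne_two_of_rows_dep {n : ℕ} (M : Matrix (Fin 2) (Fin n) ℝ)
    (l m : ℝ) (hlm : l ≠ 0 ∨ m ≠ 0) (h : ∀ j, l * M 0 j + m * M 1 j = 0) :
    M.rank ≠ 2 := by
  have hrange : Set.range M = {M 0, M 1} := by
    ext x
    constructor
    · rintro ⟨i, rfl⟩
      fin_cases i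
      exacts [Or.inl rfl, Or.inr rfl]
    · rintro (rfl | rfl)
      exacts [⟨0, rfl⟩, ⟨1, rfl⟩]
  have hle : M.rank ≤ 1 := by
    rw [Matrix.rank_eq_finrank_span_row, show Set.range M.row = {M 0, M 1} from hrange]
    rcases hlm with hl | hm
    · have hmem : M 0 ∈ span ℝ ({M 1} : Set (Fin n → ℝ)) := by
        rw [Submodule.mem_span_singleton]
        refine ⟨-(m / l), funext fun j => ?_⟩
        have := h j
        rw [Pi.smul_apply, smul_eq_mul]
        field_simp
        linarith [h j]
      have : ({M 0, M 1} : Set (Fin n → ℝ)) = insert (M 0) {M 1} := rfl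
      rw [this, Submodule.span_insert_eq_span hmem]
      exact finrank_span_single_le _
    · have hmem : M 1 ∈ span ℝ ({M 0} : Set (Fin n → ℝ)) := by
        rw [Submodule.mem_span_singleton]
        refine ⟨-(l / m), funext fun j => ?_⟩
        rw [Pi.smul_apply, smul_eq_mul]
        field_simp
        linarith [h j]
      have hpair : ({M 0, M 1} : Set (Fin n → ℝ)) = insert (M 1) {M 0} := Set.pair_comm _ _
      rw [hpair, Submodule.span_insert_eq_span hmem]
      exact finrank_span_single_le _
  omega

theorem stmt6 (a b c d : ℝ)
    (hrank : (Matrix.rank !![3 * a, 2 * b, c; b, 2 * c, 3 * d]) = 2)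
    (u v w : Fin 5 → ℝ)
    (hindep : LinearIndependent ℝ ![u, v, w]) :
    ∃ t s : ℝ,
      (Matrix.rank
        (let n1 : Fin 5 → ℝ := ![1, 0, 6 * a * t + 2 * b * s, 2 * b * t + 2 * c * s,
            3 * a * t ^ 2 + 2 * b * t * s + c * s ^ 2]
         let n2 : Fin 5 → ℝ := ![0, 1, 2 * b * t + 2 * c * s, 2 * c * t + 6 * d * s,
            b * t ^ 2 + 2 * c * t * s + 3 * d * s ^ 2]
         !![∑ i, u i * n1 i, ∑ i, v i * n1 i, ∑ i, w i * n1 i;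
            ∑ i, u i * n2 i, ∑ i, v i * n2 i, ∑ i, w i * n2 i])) = 2 := by
  classical
  by_contra hcon
  push_neg at hcon
  -- the coefficient matrix has independent rows: we will contradict this at the end
  have hCoef : ∀ l m : ℝ, (l ≠ 0 ∨ m ≠ 0) →
      ¬(l * (3 * a) + m * b = 0 ∧ l * (2 * b) + m * (2 * c) = 0 ∧
        l * c + m * (3 * d) = 0) := by
    rintro l m hlm ⟨h1, h2, h3⟩
    refine rank_ne_two_of_rows_dep !![3 * a, 2 * b, c; b, 2 * c, 3 * d] l m hlm ?_ hrank
    intro j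
    fin_cases j <;> simpa using (by assumption : _)
  set nv1 : ℝ → ℝ → (Fin 5 → ℝ) := fun t s =>
    ![1, 0, 6 * a * t + 2 * b * s, 2 * b * t + 2 * c * s,
      3 * a * t ^ 2 + 2 * b * t * s + c * s ^ 2] with hnv1
  set nv2 : ℝ → ℝ → (Fin 5 → ℝ) := fun t s =>
    ![0, 1, 2 * b * t + 2 * c * s, 2 * c * t + 6 * d * s,
      b * t ^ 2 + 2 * c * t * s + 3 * d * s ^ 2] with hnv2
  set A : Matrix (Fin 3) (Fin 5) ℝ := Matrix.of ![u, v, w] with hAdef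
  set T : (Fin 5 → ℝ) →ₗ[ℝ] (Fin 3 → ℝ) := A.mulVecLin with hTdef
  have hrankA : A.rank = 3 := by
    rw [Matrix.rank_eq_finrank_span_row]
    have hr : Set.range A = Set.range ![u, v, w] := rfl
    rw [show Set.range A.row = Set.range ![u, v, w] from hr, finrank_span_eq_card hindep]
    simp
  have hkerT : finrank ℝ (LinearMap.ker T) = 2 := by
    have h5 : finrank ℝ (Fin 5 → ℝ) = 5 := Module.finrank_fin_fun ℝ
    have hrn := T.finrank_range_add_finrank_ker
    rw [h5] at hrn
    have hr : finrank ℝ (LinearMap.range T) = 3 := hrankA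
    omega
  -- T applied to a combination of n1, n2, expressed by the sums in the matrix
  have hTval : ∀ (l m t s : ℝ),
      T (fun i => l * nv1 t s i + m * nv2 t s i) =
      fun j => l * (∑ i, (![u, v, w] j) i * nv1 t s i) +
               m * (∑ i, (![u, v, w] j) i * nv2 t s i) := by
    intro l m t s
    funext j
    simp only [hTdef, Matrix.mulVecLin_apply, Matrix.mulVec, dotProduct, hAdef,
      Matrix.of_apply]
    rw [Finset.mul_sum, Finset.mul_sum, ← Finset.sum_add_distrib]
    exact Finset.sum_congr rfl fun i _ => by ring
  -- at every point the two rows are dependent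
  have key : ∀ t s : ℝ, ∃ l m : ℝ, (l ≠ 0 ∨ m ≠ 0) ∧
      T (fun i => l * nv1 t s i + m * nv2 t s i) = 0 := by
    intro t s
    obtain ⟨l, m, hlm, hj⟩ := rows_dep_of_rank_ne_two
      (!![∑ i, u i * nv1 t s i, ∑ i, v i * nv1 t s i, ∑ i, w i * nv1 t s i;
          ∑ i, u i * nv2 t s i, ∑ i, v i * nv2 t s i, ∑ i, w i * nv2 t s i])
      (hcon t s)
    refine ⟨l, m, hlm, ?_⟩
    rw [hTval]
    funext j
    have h0 := hj 0
    have h1 := hj 1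
    have h2 := hj 2
    simp only [Matrix.of_apply, Matrix.cons_val', Matrix.cons_val_zero, Matrix.cons_val_one, Matrix.head_cons,
      Matrix.empty_val', Matrix.cons_val_fin_one, Matrix.head_fin_const] at h0 h1 h2
    fin_cases j
    · simpa using h0
    · simpa using h1
    · simpa using h2
  -- any three vectors in ker T are linearly dependent
  have dep3 : ∀ x1 x2 x3 : Fin 5 → ℝ, T x1 = 0 → T x2 = 0 → T x3 = 0 →
      ∃ c1 c2 c3 : ℝ, (c1 ≠ 0 ∨ c2 ≠ 0 ∨ c3 ≠ 0) ∧
        ∀ i, c1 * x1 i + c2 * x2 i + c3 * x3 i = 0 := by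
    intro x1 x2 x3 h1 h2 h3
    have hni : ¬ LinearIndependent ℝ ![x1, x2, x3] := by
      intro hli
      have hsp : span ℝ (Set.range ![x1, x2, x3]) ≤ LinearMap.ker T := by
        rw [Submodule.span_le]
        rintro x ⟨i, rfl⟩
        fin_cases i
        · simpa [LinearMap.mem_ker] using h1
        · simpa [LinearMap.mem_ker] using h2
        · simpa [LinearMap.mem_ker] using h3
      have h3' : finrank ℝ (span ℝ (Set.range ![x1, x2, x3])) = 3 := by
        rw [finrank_span_eq_card hli]; simp
      have hmono := Submodule.finrank_mono hsp
      omega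
    obtain ⟨g, hg, i, hgi⟩ := Fintype.not_linearIndependent_iff.mp hni
    refine ⟨g 0, g 1, g 2, ?_, ?_⟩
    · fin_cases i
      · exact Or.inl hgi
      · exact Or.inr (Or.inl hgi)
      · exact Or.inr (Or.inr hgi)
    · intro j
      rw [Fin.sum_univ_three] at hg
      have := congrFun hg j
      simp only [Matrix.cons_val_zero, Matrix.cons_val_one, Matrix.head_cons, Pi.add_apply,
        Pi.smul_apply, smul_eq_mul, Pi.zero_apply, Matrix.cons_val_two, Matrix.tail_cons] at this
      linarith
  by_cases hA2 : ∃ t1 s1 t2 s2 l1 m1 l2 m2 : ℝ,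
      T (fun i => l1 * nv1 t1 s1 i + m1 * nv2 t1 s1 i) = 0 ∧
      T (fun i => l2 * nv1 t2 s2 i + m2 * nv2 t2 s2 i) = 0 ∧
      l1 * m2 - m1 * l2 ≠ 0
  · -- CASE A : two dependency directions are independent
    obtain ⟨t1, s1, t2, s2, l1, m1, l2, m2, hw1, hw2, hd⟩ := hA2
    set W1 : Fin 5 → ℝ := fun i => l1 * nv1 t1 s1 i + m1 * nv2 t1 s1 i with hW1
    set W2 : Fin 5 → ℝ := fun i => l2 * nv1 t2 s2 i + m2 * nv2 t2 s2 i with hW2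
    have eW10 : W1 0 = l1 := by simp [hW1, hnv1, hnv2]
    have eW11 : W1 1 = m1 := by simp [hW1, hnv1, hnv2]
    have eW20 : W2 0 = l2 := by simp [hW2, hnv1, hnv2]
    have eW21 : W2 1 = m2 := by simp [hW2, hnv1, hnv2]
    have hGA : ∀ t s : ℝ,
        (l1 * (6*a*t+2*b*s) + m1 * (2*b*t+2*c*s) - W1 2) *
          (l2 * (2*b*t+2*c*s) + m2 * (2*c*t+6*d*s) - W2 3) -
        (l2 * (6*a*t+2*b*s) + m2 * (2*b*t+2*c*s) - W2 2) *
          (l1 * (2*b*t+2*c*s) + m1 * (2*c*t+6*d*s) - W1 3) = 0 := by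
      intro t s
      obtain ⟨l, m, hlm, hmem⟩ := key t s
      obtain ⟨c1, c2, c3, hc, hE⟩ := dep3 W1 W2 _ hw1 hw2 hmem
      have E0 := hE 0
      have E1 := hE 1
      have E2 := hE 2
      have E3 := hE 3
      simp only [hnv1, hnv2] at E0 E1 E2 E3
      simp only [Matrix.cons_val_zero, Matrix.cons_val_one, Matrix.head_cons,
        Matrix.cons_val_two, Matrix.tail_cons, Matrix.cons_val_three] at E0 E1 E2 E3
      rw [eW10, eW20] at E0
      rw [eW11, eW21] at E1
      have hc3 : c3 ≠ 0 := by
        intro h3z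
        rw [h3z] at E0 E1
        have hc1 : c1 = 0 := by
          have hz : c1 * (l1 * m2 - m1 * l2) = 0 := by linear_combination m2 * E0 - l2 * E1
          exact (mul_eq_zero.mp hz).resolve_right hd
        have hc2 : c2 = 0 := by
          have hz : c2 * (l1 * m2 - m1 * l2) = 0 := by linear_combination l1 * E1 - m1 * E0
          exact (mul_eq_zero.mp hz).resolve_right hd
        rcases hc with h | h | h
        · exact h hc1
        · exact h hc2
        · exact h h3z
      have hc12 : c1 ≠ 0 ∨ c2 ≠ 0 := by
        by_contra hno
        push_neg at hno
        obtain ⟨h1z, h2z⟩ := hno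
        rw [h1z, h2z] at E0 E1
        have hl : l = 0 := by
          have : c3 * l = 0 := by linear_combination E0
          exact (mul_eq_zero.mp this).resolve_left hc3
        have hm : m = 0 := by
          have : c3 * m = 0 := by linear_combination E1
          exact (mul_eq_zero.mp this).resolve_left hc3
        rcases hlm with h | h
        · exact h hl
        · exact h hm
      have F2 : (l1 * (6*a*t+2*b*s) + m1 * (2*b*t+2*c*s) - W1 2) * c1 +
          (l2 * (6*a*t+2*b*s) + m2 * (2*b*t+2*c*s) - W2 2) * c2 = 0 := by
        linear_combination (6*a*t+2*b*s) * E0 + (2*b*t+2*c*s) * E1 - E2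
      have F3 : (l1 * (2*b*t+2*c*s) + m1 * (2*c*t+6*d*s) - W1 3) * c1 +
          (l2 * (2*b*t+2*c*s) + m2 * (2*c*t+6*d*s) - W2 3) * c2 = 0 := by
        linear_combination (2*b*t+2*c*s) * E0 + (2*c*t+6*d*s) * E1 - E3
      exact det2_aux F2 F3 hc12
    have hHt : ∀ t s : ℝ,
        (6*a*t+2*b*s) * (2*c*t+6*d*s) - (2*b*t+2*c*s)^2 = 0 := by
      intro t s
      have hz : (l1 * m2 - m1 * l2) *
          ((6*a*t+2*b*s) * (2*c*t+6*d*s) - (2*b*t+2*c*s)^2) = 0 := by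
        linear_combination (hGA t s) / 2 + (hGA (-t) (-s)) / 2 - hGA 0 0
      exact (mul_eq_zero.mp hz).resolve_left hd
    obtain ⟨l, m, hlm, e1, e2, e3⟩ := pair_dep_of_minors (3*a) (2*b) c b (2*c) (3*d)
      (by linear_combination (hHt 1 0) / 2)
      (by linear_combination (hHt 1 1 - hHt 1 0 - hHt 0 1) / 4)
      (by linear_combination (hHt 0 1) / 2)
    exact hCoef l m hlm ⟨e1, e2, e3⟩
  · -- CASE B : all dependency directions are proportional
    push_neg at hA2
    obtain ⟨l0, m0, hlm0, hmem0⟩ := key 0 0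
    have hfix : ∀ t s : ℝ, T (fun i => l0 * nv1 t s i + m0 * nv2 t s i) = 0 := by
      intro t s
      obtain ⟨l, m, hlm, hmem⟩ := key t s
      have hrel : l0 * m - m0 * l = 0 := hA2 0 0 t s l0 m0 l m hmem0 hmem
      obtain ⟨k, hk, hl, hm⟩ : ∃ k : ℝ, k ≠ 0 ∧ l = k * l0 ∧ m = k * m0 := by
        rcases hlm0 with h0 | h0
        · have hlne : l ≠ 0 := by
            intro hlz
            rw [hlz] at hrel
            have hmz : m = 0 := by
              have : l0 * m = 0 := by linear_combination hrel
              exact (mul_eq_zero.mp this).resolve_left h0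
            rcases hlm with h | h
            · exact h hlz
            · exact h hmz
          refine ⟨l / l0, div_ne_zero hlne h0, by field_simp, ?_⟩
          field_simp
          linear_combination hrel
        · have hmne : m ≠ 0 := by
            intro hmz
            rw [hmz] at hrel
            have hlz : l = 0 := by
              have : m0 * l = 0 := by linear_combination -hrel
              exact (mul_eq_zero.mp this).resolve_left h0
            rcases hlm with h | h
            · exact h hlz
            · exact h hmz
          refine ⟨m / m0, div_ne_zero hmne h0, ?_, by field_simp⟩
          field_simp
          linear_combination -hrel
      have hvec : (fun i => l0 * nv1 t s i + m0 * nv2 t s i)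
          = k⁻¹ • (fun i => l * nv1 t s i + m * nv2 t s i) := by
        funext i
        simp only [Pi.smul_apply, smul_eq_mul, hl, hm]
        field_simp
      rw [hvec, LinearMap.map_smul, hmem, smul_zero]
    have hID : ∀ t s t' s' : ℝ,
        ((l0*(6*a*t+2*b*s) + m0*(2*b*t+2*c*s)) * (l0*(2*b*t'+2*c*s') + m0*(2*c*t'+6*d*s'))
          - (l0*(6*a*t'+2*b*s') + m0*(2*b*t'+2*c*s')) * (l0*(2*b*t+2*c*s) + m0*(2*c*t+6*d*s)) = 0) ∧
        ((l0*(6*a*t+2*b*s) + m0*(2*b*t+2*c*s)) *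
            (l0*(3*a*t'^2+2*b*t'*s'+c*s'^2) + m0*(b*t'^2+2*c*t'*s'+3*d*s'^2))
          - (l0*(6*a*t'+2*b*s') + m0*(2*b*t'+2*c*s')) *
            (l0*(3*a*t^2+2*b*t*s+c*s^2) + m0*(b*t^2+2*c*t*s+3*d*s^2)) = 0) ∧
        ((l0*(2*b*t+2*c*s) + m0*(2*c*t+6*d*s)) *
            (l0*(3*a*t'^2+2*b*t'*s'+c*s'^2) + m0*(b*t'^2+2*c*t'*s'+3*d*s'^2))
          - (l0*(2*b*t'+2*c*s') + m0*(2*c*t'+6*d*s')) *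
            (l0*(3*a*t^2+2*b*t*s+c*s^2) + m0*(b*t^2+2*c*t*s+3*d*s^2)) = 0) := by
      intro t s t' s'
      have hg1 : T (fun i => (l0 * nv1 t s i + m0 * nv2 t s i)
          - (l0 * nv1 0 0 i + m0 * nv2 0 0 i)) = 0 := by
        have heq : (fun i => (l0 * nv1 t s i + m0 * nv2 t s i)
            - (l0 * nv1 0 0 i + m0 * nv2 0 0 i))
            = (fun i => l0 * nv1 t s i + m0 * nv2 t s i)
              - (fun i => l0 * nv1 0 0 i + m0 * nv2 0 0 i) := rfl
        rw [heq, map_sub, hfix t s, hfix 0 0, sub_zero]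
      have hg2 : T (fun i => (l0 * nv1 t' s' i + m0 * nv2 t' s' i)
          - (l0 * nv1 0 0 i + m0 * nv2 0 0 i)) = 0 := by
        have heq : (fun i => (l0 * nv1 t' s' i + m0 * nv2 t' s' i)
            - (l0 * nv1 0 0 i + m0 * nv2 0 0 i))
            = (fun i => l0 * nv1 t' s' i + m0 * nv2 t' s' i)
              - (fun i => l0 * nv1 0 0 i + m0 * nv2 0 0 i) := rfl
        rw [heq, map_sub, hfix t' s', hfix 0 0, sub_zero]
      obtain ⟨c1, c2, c3, hc, hE⟩ := dep3 _ _ _ (hfix 0 0) hg1 hg2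
      have E0 := hE 0
      have E1 := hE 1
      have E2 := hE 2
      have E3 := hE 3
      have E4 := hE 4
      simp only [hnv1, hnv2] at E0 E1 E2 E3 E4
      simp only [Matrix.cons_val_zero, Matrix.cons_val_one, Matrix.head_cons,
        Matrix.cons_val_two, Matrix.tail_cons, Matrix.cons_val_three,
        Matrix.cons_val_four] at E0 E1 E2 E3 E4
      have hc1 : c1 = 0 := by
        rcases hlm0 with h0 | h0
        · have : c1 * l0 = 0 := by linear_combination E0
          exact (mul_eq_zero.mp this).resolve_right h0
        · have : c1 * m0 = 0 := by linear_combination E1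
          exact (mul_eq_zero.mp this).resolve_right h0
      have hc23 : c2 ≠ 0 ∨ c3 ≠ 0 := by
        rcases hc with h | h | h
        · exact absurd hc1 h
        · exact Or.inl h
        · exact Or.inr h
      have F2 : (l0*(6*a*t+2*b*s) + m0*(2*b*t+2*c*s)) * c2 +
          (l0*(6*a*t'+2*b*s') + m0*(2*b*t'+2*c*s')) * c3 = 0 := by
        linear_combination E2 - (l0*(6*a*0+2*b*0) + m0*(2*b*0+2*c*0)) * hc1
      have F3 : (l0*(2*b*t+2*c*s) + m0*(2*c*t+6*d*s)) * c2 +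
          (l0*(2*b*t'+2*c*s') + m0*(2*c*t'+6*d*s')) * c3 = 0 := by
        linear_combination E3
      have F4 : (l0*(3*a*t^2+2*b*t*s+c*s^2) + m0*(b*t^2+2*c*t*s+3*d*s^2)) * c2 +
          (l0*(3*a*t'^2+2*b*t'*s'+c*s'^2) + m0*(b*t'^2+2*c*t'*s'+3*d*s'^2)) * c3 = 0 := by
        linear_combination E4
      exact ⟨det2_aux F2 F3 hc23, det2_aux F2 F4 hc23, det2_aux F3 F4 hc23⟩
    have hA1 : 3*a*l0 + b*m0 = 0 := by
      have h2 : (3*a*l0 + b*m0)^2 = 0 := by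
        linear_combination ((hID 1 0 2 0).2.1) / 4
      exact pow_eq_zero_iff two_ne_zero |>.mp h2
    have hA3 : c*l0 + 3*d*m0 = 0 := by
      have h2 : (c*l0 + 3*d*m0)^2 = 0 := by
        linear_combination ((hID 0 1 0 2).2.2) / 4
      exact pow_eq_zero_iff two_ne_zero |>.mp h2
    have hA2v : b*l0 + c*m0 = 0 := by
      have h2 : (b*l0 + c*m0)^2 = 0 := by
        linear_combination ((hID 0 1 1 0).1) / 4 + (c*l0 + 3*d*m0) * hA1
      exact pow_eq_zero_iff two_ne_zero |>.mp h2
    exact hCoef l0 m0 hlm0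
      ⟨by linear_combination hA1, by linear_combination 2 * hA2v, by linear_combination hA3⟩
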